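/- Let G be a triangle-free graph containing a facial 5-cycle v1v2v3v4v5 with all five vertices of degree exactly 3, and for i=1,...,4 let x_i be the third neighbor of v_i, where x1 and x3 are distinct and non-adjacent and have no common neighbor outside {v1,...,v5}. Let G' be obtained from G − {v1,...,v5} by adding the edge x1x3. Then G' is triangle-free and every proper 3-coloring of G' extends to a proper 3-coloring of G. -/

import Mathlib

/-- `l` lists the vertices of a cycle of `G` in cyclic order. -/
def IsCycleList {V : Type} (G : SimpleGraph V) (l : List V) : Prop :=
  3 ≤ l.length ∧ l.Nodup ∧ l.Chain' G.Adj ∧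
    ∀ h : l ≠ [], G.Adj (l.getLast h) (l.head h)

/-- The edges of the cycle whose vertices are listed (in cyclic order) by `l`. -/
def cycleEdges {V : Type} (l : List V) : List (Sym2 V) :=
  (l.zip (l.rotate 1)).map fun p => s(p.1, p.2)

/-- A combinatorial model of a finite simple graph drawn in the plane, together with its
faces.  `bounds f l` says that the cycle listed by `l` bounds the face `f`; `vinc v f` says
that the vertex `v` is incident with the face `f`; `inside l` is the set of vertices of the
graph lying in the open disk bounded by the cycle listed by `l`.  Euler's formula and the
face handshake identity are part of the data. -/
structure PlaneGraph (V : Type) [Fintype V] [DecidableEq V] where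
  graph : SimpleGraph V
  Face : Type
  [fintypeFace : Fintype Face]
  [decEqFace : DecidableEq Face]
  outer : Face
  len : Face → ℕ
  bounds : Face → List V → Prop
  vinc : V → Face → Prop
  inside : List V → Set V
  euler : (Fintype.card V : ℤ) - graph.edgeSet.ncard + Fintype.card Face
      = 1 + Nat.card graph.ConnectedComponent
  handshake : (∑ f : Face, (len f : ℤ)) = 2 * graph.edgeSet.ncard
  bounds_isCycle : ∀ f l, bounds f l → IsCycleList graph l
  bounds_len : ∀ f l, bounds f l → len f = l.length
  bounds_rotate : ∀ f l, bounds f l → bounds f (l.rotate 1)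
  bounds_reverse : ∀ f l, bounds f l → bounds f l.reverse
  vinc_ncard_le : ∀ f, Set.ncard {v | vinc v f} ≤ len f
  mem_bounds_vinc : ∀ f l v, bounds f l → v ∈ l → vinc v f

attribute [instance] PlaneGraph.fintypeFace PlaneGraph.decEqFace

namespace PlaneGraph

variable {V : Type} [Fintype V] [DecidableEq V]

/-- The degree of a vertex. -/
noncomputable def deg (P : PlaneGraph V) (v : V) : ℕ := (P.graph.neighborSet v).ncard

/-- The list `l` is a facial cycle (in cyclic order). -/
def IsFacial (P : PlaneGraph V) (l : List V) : Prop := ∃ f, P.bounds f l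

/-- Every path of length at most 3 joining `a` and `b` is a subgraph of the cycle `l`. -/
def DiagSafe (P : PlaneGraph V) (l : List V) (a b : V) : Prop :=
  ∀ p : P.graph.Walk a b, p.IsPath → p.length ≤ 3 → ∀ e ∈ p.edges, e ∈ cycleEdges l

/-- A vertex is `C`-admissible if it is small (degree < 60) and not on `C`. -/
def Admissible (P : PlaneGraph V) (C : List V) (v : V) : Prop := P.deg v < 60 ∧ v ∉ C

def SafeTetragram (P : PlaneGraph V) (v1 v2 v3 v4 : V) : Prop :=
  P.IsFacial [v1, v2, v3, v4] ∧ P.DiagSafe [v1, v2, v3, v4] v1 v3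

def SafeHexagram (P : PlaneGraph V) (v1 v2 v3 v4 v5 v6 : V) : Prop :=
  P.IsFacial [v1, v2, v3, v4, v5, v6] ∧
    ∀ p : P.graph.Walk v1 v3, p.IsPath → p.length ≤ 3 → p.support = [v1, v2, v3]

/-- A facial 5-cycle whose first four vertices have degree 3, with `x i` the third
neighbor of `v i`. -/
def Pentagram (P : PlaneGraph V) (v1 v2 v3 v4 v5 x1 x2 x3 x4 : V) : Prop :=
  P.IsFacial [v1, v2, v3, v4, v5] ∧
  (P.deg v1 = 3 ∧ P.deg v2 = 3 ∧ P.deg v3 = 3 ∧ P.deg v4 = 3) ∧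
  (P.graph.Adj v1 x1 ∧ x1 ≠ v5 ∧ x1 ≠ v2) ∧
  (P.graph.Adj v2 x2 ∧ x2 ≠ v1 ∧ x2 ≠ v3) ∧
  (P.graph.Adj v3 x3 ∧ x3 ≠ v2 ∧ x3 ≠ v4) ∧
  (P.graph.Adj v4 x4 ∧ x4 ≠ v3 ∧ x4 ≠ v5)

def SafePentagram (P : PlaneGraph V) (v1 v2 v3 v4 v5 x1 x2 x3 x4 : V) : Prop :=
  List.Pairwise (fun a b => a ≠ b ∧ ¬P.graph.Adj a b) [x1, x2, x3, x4] ∧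
  (∀ p : P.graph.Walk x2 v5, p.IsPath → p.length ≤ 3 →
      ¬∀ w ∈ p.support, w ∉ ([v1, v2, v3, v4] : List V)) ∧
  (∀ p : P.graph.Walk x3 x4, p.IsPath → p.length ≤ 3 →
      (∀ w ∈ p.support, w ∉ ([v1, v2, v3, v4] : List V)) →
      p.length = 2 ∧ ∃ y, p.support = [x3, y, x4] ∧ P.IsFacial [x3, v3, v4, x4, y])

def SecureMonogram (P : PlaneGraph V) (C : List V) (v : V) : Prop :=
  P.deg v ≤ 2 ∧ v ∉ C

def SecureTetragram (P : PlaneGraph V) (C : List V) (v1 v2 v3 v4 : V) : Prop :=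
  P.SafeTetragram v1 v2 v3 v4 ∧ P.Admissible C v1 ∧ P.deg v1 = 3 ∧
  ∀ x, P.graph.Adj v1 x → x ≠ v2 → x ≠ v4 →
    P.Admissible C x ∧
      (P.Admissible C v3 ∨
        ∀ w, P.graph.Adj x w →
          P.Admissible C w ∨ P.IsFacial [v1, v2, w, x] ∨ P.IsFacial [v1, v4, w, x])

def SecureOctagram (P : PlaneGraph V) (C : List V) (v1 v2 v3 v4 : V) : Prop :=
  P.IsFacial [v1, v2, v3, v4] ∧
    ∀ v ∈ ([v1, v2, v3, v4] : List V), P.deg v = 3 ∧ P.Admissible C v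

def SecurePentagram (P : PlaneGraph V) (C : List V) (v1 v2 v3 v4 v5 x1 x2 x3 x4 : V) : Prop :=
  P.Pentagram v1 v2 v3 v4 v5 x1 x2 x3 x4 ∧
  P.SafePentagram v1 v2 v3 v4 v5 x1 x2 x3 x4 ∧
  (∀ v ∈ ([v1, v2, v3, v4, v5, x1, x2, x3, x4] : List V), P.Admissible C v) ∧
  ((∀ w, P.graph.Adj v5 w → P.Admissible C w) ∨ (∀ w, P.graph.Adj x2 w → P.Admissible C w)) ∧
  ((∀ w, P.graph.Adj x3 w → P.Admissible C w) ∨ (∀ w, P.graph.Adj x4 w → P.Admissible C w))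

def SecureDecagram (P : PlaneGraph V) (C : List V) (v1 v2 v3 v4 v5 x1 x2 x3 x4 : V) : Prop :=
  P.Pentagram v1 v2 v3 v4 v5 x1 x2 x3 x4 ∧ P.deg v5 = 3 ∧
  x1 ≠ x3 ∧ ¬P.graph.Adj x1 x3 ∧ (¬∃ y, P.graph.Adj x1 y ∧ P.graph.Adj y x3) ∧
  ∀ v ∈ ([v1, v2, v3, v4, v5, x1, x3] : List V), P.Admissible C v

def SecureHexagram (P : PlaneGraph V) (C : List V) (v1 v2 v3 v4 v5 v6 : V) : Prop :=
  P.SafeHexagram v1 v2 v3 v4 v5 v6 ∧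
  P.Admissible C v1 ∧ P.Admissible C v3 ∧ P.Admissible C v6 ∧ P.deg v1 = 3 ∧
  ∀ x, P.graph.Adj v1 x → x ≠ v2 → x ≠ v6 → P.Admissible C x

/-- `G` contains a `C`-secure multigram. -/
def HasSecureMultigram (P : PlaneGraph V) (C : List V) : Prop :=
  (∃ v, P.SecureMonogram C v) ∨
  (∃ v1 v2 v3 v4, P.SecureTetragram C v1 v2 v3 v4 ∨ P.SecureOctagram C v1 v2 v3 v4) ∨
  (∃ v1 v2 v3 v4 v5 x1 x2 x3 x4,
      P.SecurePentagram C v1 v2 v3 v4 v5 x1 x2 x3 x4 ∨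
      P.SecureDecagram C v1 v2 v3 v4 v5 x1 x2 x3 x4) ∨
  (∃ v1 v2 v3 v4 v5 v6, P.SecureHexagram C v1 v2 v3 v4 v5 v6)

end PlaneGraph

/-- Identify `v` with `u`: all edges at `v` are transferred to `u` (and `v` becomes
isolated); parallel edges are merged. -/
def identifyVerts {V : Type} [DecidableEq V] (G : SimpleGraph V) (u v : V) : SimpleGraph V :=
  SimpleGraph.fromRel fun a b =>
    ∃ x y, G.Adj x y ∧ (if x = v then u else x) = a ∧ (if y = v then u else y) = b

/-- Delete the vertices in `s` (they are kept as isolated vertices). -/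
def deleteVerts {V : Type} (G : SimpleGraph V) (s : Set V) : SimpleGraph V :=
  SimpleGraph.fromRel fun a b => G.Adj a b ∧ a ∉ s ∧ b ∉ s

/-- Add the edge `ab`. -/
def addEdge {V : Type} (G : SimpleGraph V) (a b : V) : SimpleGraph V :=
  G ⊔ SimpleGraph.fromRel fun x y => x = a ∧ y = b

/-- `G` can be drawn in the plane: vertices go to distinct points, edges to arcs, arcs are
simple, meet vertices only at their own endpoints, and two arcs of distinct edges meet
only at common endpoints. -/
def SimpleGraph.IsPlanar {V : Type} (G : SimpleGraph V) : Prop :=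
  ∃ (pos : V → ℝ × ℝ) (arc : ∀ u v, G.Adj u v → _root_.Path (pos u) (pos v)),
    Function.Injective pos ∧
    (∀ u v (h : G.Adj u v), Function.Injective (arc u v h)) ∧
    (∀ u v (h : G.Adj u v) (w : V), pos w ∈ Set.range (arc u v h) → w = u ∨ w = v) ∧
    (∀ u v u' v' (h : G.Adj u v) (h' : G.Adj u' v'), s(u, v) ≠ s(u', v') →
      ∀ p ∈ Set.range (arc u v h) ∩ Set.range (arc u' v' h'), ∃ w, p = pos w)


set_option synthInstance.maxSize 2000 in
set_option maxHeartbeats 2000000 in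
private lemma cycle5_color : ∀ a1 a2 a3 a4 a5 : Fin 3, a1 ≠ a3 →
    ∃ b1 b2 b3 b4 b5 : Fin 3, b1 ≠ a1 ∧ b2 ≠ a2 ∧ b3 ≠ a3 ∧ b4 ≠ a4 ∧ b5 ≠ a5 ∧
      b1 ≠ b2 ∧ b2 ≠ b3 ∧ b3 ≠ b4 ∧ b4 ≠ b5 ∧ b5 ≠ b1 := by decide

private lemma nbr3 {V : Type} [Fintype V] [DecidableEq V] (G : SimpleGraph V)
    (v a b c : V) (hd : (G.neighborSet v).ncard = 3)
    (hva : G.Adj v a) (hvb : G.Adj v b) (hvc : G.Adj v c)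
    (hab : a ≠ b) (hac : a ≠ c) (hbc : b ≠ c) :
    ∀ w, G.Adj v w → w = a ∨ w = b ∨ w = c := by
  intro w hw
  have hsub : ({a, b, c} : Set V) ⊆ G.neighborSet v := by
    intro z hz
    rcases hz with rfl | rfl | rfl <;> assumption
  have hcard : ({a, b, c} : Set V).ncard = 3 := by
    rw [Set.ncard_insert_of_notMem (by simp [hab, hac]),
      Set.ncard_insert_of_notMem (by simp [hbc]), Set.ncard_singleton]
  have heq := Set.eq_of_subset_of_ncard_le hsub (by rw [hd, hcard])
  have : w ∈ ({a, b, c} : Set V) := heq ▸ hw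
  simpa using this

private lemma third_nbr {V : Type} [Fintype V] [DecidableEq V] (G : SimpleGraph V)
    (v a b : V) (hd : (G.neighborSet v).ncard = 3) :
    ∃ c, G.Adj v c ∧ c ≠ a ∧ c ≠ b := by
  by_contra hc
  push_neg at hc
  have hsub : G.neighborSet v ⊆ {a, b} := by
    intro z hz
    by_cases h : z = a
    · simp [h]
    · simp [hc z hz h]
  have h1 := Set.ncard_le_ncard hsub (Set.toFinite _)
  have h2 : ({a, b} : Set V).ncard ≤ 2 :=
    (Set.ncard_insert_le _ _).trans (by simp)
  rw [hd] at h1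
  omega

/-- The decagram reduction: delete the five vertices of a facial 5-cycle of degree-3
vertices and add the edge `x1 x3`.  The result is triangle-free and every proper
3-coloring of it extends to a proper 3-coloring of `G`. -/
theorem decagram_reduction {V : Type} [Fintype V] [DecidableEq V] (P : PlaneGraph V)
    (htf : P.graph.CliqueFree 3) (v1 v2 v3 v4 v5 x1 x2 x3 x4 : V)
    (hpent : P.Pentagram v1 v2 v3 v4 v5 x1 x2 x3 x4) (hdeg5 : P.deg v5 = 3)
    (hne : x1 ≠ x3) (hadj : ¬P.graph.Adj x1 x3)
    (hcom : ¬∃ y, y ∉ ([v1, v2, v3, v4, v5] : List V) ∧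
        P.graph.Adj x1 y ∧ P.graph.Adj y x3) :
    (addEdge (deleteVerts P.graph {v1, v2, v3, v4, v5}) x1 x3).CliqueFree 3 ∧
    ∀ c' : (addEdge (deleteVerts P.graph {v1, v2, v3, v4, v5}) x1 x3).Coloring (Fin 3),
      ∃ c : P.graph.Coloring (Fin 3),
        ∀ w, w ∉ ([v1, v2, v3, v4, v5] : List V) → c w = c' w := by
  classical
  obtain ⟨⟨f, hf⟩, ⟨hd1, hd2, hd3, hd4⟩, ⟨ha1, hx1v5, hx1v2⟩, ⟨ha2, hx2v1, hx2v3⟩,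
    ⟨ha3, hx3v2, hx3v4⟩, ⟨ha4, hx4v3, hx4v5⟩⟩ := hpent
  obtain ⟨-, hnodup, hchain, hlast⟩ := P.bounds_isCycle f _ hf
  have e51 : P.graph.Adj v5 v1 := by simpa using hlast (by simp)
  simp only [List.Chain', List.isChain_cons_cons, List.isChain_singleton, and_true] at hchain
  have e12 : P.graph.Adj v1 v2 := by tauto
  have e23 : P.graph.Adj v2 v3 := by tauto
  have e34 : P.graph.Adj v3 v4 := by tauto
  have e45 : P.graph.Adj v4 v5 := by tauto
  simp only [List.nodup_cons, List.mem_cons, List.not_mem_nil, or_false, not_or,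
    List.nodup_nil, and_true, List.mem_singleton] at hnodup
  have d12 : v1 ≠ v2 := by tauto
  have d13 : v1 ≠ v3 := by tauto
  have d14 : v1 ≠ v4 := by tauto
  have d15 : v1 ≠ v5 := by tauto
  have d23 : v2 ≠ v3 := by tauto
  have d24 : v2 ≠ v4 := by tauto
  have d25 : v2 ≠ v5 := by tauto
  have d34 : v3 ≠ v4 := by tauto
  have d35 : v3 ≠ v5 := by tauto
  have d45 : v4 ≠ v5 := by tauto
  have notri : ∀ a b c : V, P.graph.Adj a b → P.graph.Adj a c → P.graph.Adj b c → False :=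
    fun a b c hab hac hbc => htf {a, b, c} (SimpleGraph.is3Clique_triple_iff.mpr ⟨hab, hac, hbc⟩)
  unfold PlaneGraph.deg at hd1 hd2 hd3 hd4 hdeg5
  have nb1 := nbr3 P.graph v1 v2 v5 x1 hd1 e12 e51.symm ha1 d25 (Ne.symm hx1v2) (Ne.symm hx1v5)
  have nb2 := nbr3 P.graph v2 v1 v3 x2 hd2 e12.symm e23 ha2 d13 (Ne.symm hx2v1) (Ne.symm hx2v3)
  have nb3 := nbr3 P.graph v3 v2 v4 x3 hd3 e23.symm e34 ha3 d24 (Ne.symm hx3v2) (Ne.symm hx3v4)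
  have nb4 := nbr3 P.graph v4 v3 v5 x4 hd4 e34.symm e45 ha4 d35 (Ne.symm hx4v3) (Ne.symm hx4v5)
  obtain ⟨x5, ha5, hx5v4, hx5v1⟩ := third_nbr P.graph v5 v4 v1 hdeg5
  have nb5 := nbr3 P.graph v5 v4 v1 x5 hdeg5 e45.symm e51 ha5 (Ne.symm d14)
    (Ne.symm hx5v4) (Ne.symm hx5v1)
  -- the x's are not on the cycle
  have nx1v1 : x1 ≠ v1 := by intro h; rw [h] at ha1; exact P.graph.loopless.irrefl _ ha1
  have nx1v3 : x1 ≠ v3 := by intro h; rw [h] at ha1; exact notri v1 v2 v3 e12 ha1 e23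
  have nx1v4 : x1 ≠ v4 := by intro h; rw [h] at ha1; exact notri v5 v1 v4 e51 e45.symm ha1
  have nx2v2 : x2 ≠ v2 := by intro h; rw [h] at ha2; exact P.graph.loopless.irrefl _ ha2
  have nx2v4 : x2 ≠ v4 := by intro h; rw [h] at ha2; exact notri v2 v3 v4 e23 ha2 e34
  have nx2v5 : x2 ≠ v5 := by intro h; rw [h] at ha2; exact notri v1 v2 v5 e12 e51.symm ha2
  have nx3v1 : x3 ≠ v1 := by intro h; rw [h] at ha3; exact notri v1 v2 v3 e12 ha3.symm e23
  have nx3v3 : x3 ≠ v3 := by intro h; rw [h] at ha3; exact P.graph.loopless.irrefl _ ha3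
  have nx3v5 : x3 ≠ v5 := by intro h; rw [h] at ha3; exact notri v3 v4 v5 e34 ha3 e45
  have nx4v1 : x4 ≠ v1 := by intro h; rw [h] at ha4; exact notri v5 v4 v1 e45.symm e51 ha4
  have nx4v2 : x4 ≠ v2 := by intro h; rw [h] at ha4; exact notri v2 v3 v4 e23 ha4.symm e34
  have nx4v4 : x4 ≠ v4 := by intro h; rw [h] at ha4; exact P.graph.loopless.irrefl _ ha4
  have nx5v2 : x5 ≠ v2 := by intro h; rw [h] at ha5; exact notri v1 v2 v5 e12 e51.symm ha5.symm
  have nx5v3 : x5 ≠ v3 := by intro h; rw [h] at ha5; exact notri v3 v4 v5 e34 ha5.symm e45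
  have nx5v5 : x5 ≠ v5 := by intro h; rw [h] at ha5; exact P.graph.loopless.irrefl _ ha5
  have hmem : ∀ a b : V, (addEdge (deleteVerts P.graph {v1, v2, v3, v4, v5}) x1 x3).Adj a b →
      (P.graph.Adj a b ∧ a ∉ ({v1, v2, v3, v4, v5} : Set V) ∧
        b ∉ ({v1, v2, v3, v4, v5} : Set V)) ∨
      ((a = x1 ∧ b = x3) ∨ (a = x3 ∧ b = x1)) := by
    intro a b h
    rw [addEdge, SimpleGraph.sup_adj, deleteVerts, SimpleGraph.fromRel_adj,
      SimpleGraph.fromRel_adj] at h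
    rcases h with ⟨hne', h⟩ | ⟨hne', h⟩
    · left
      rcases h with ⟨h1, h2, h3⟩ | ⟨h1, h2, h3⟩
      exacts [⟨h1, h2, h3⟩, ⟨h1.symm, h3, h2⟩]
    · right; tauto
  constructor
  · intro t ht
    obtain ⟨a, b, c, hab, hac, hbc, rfl⟩ := Finset.card_eq_three.mp ht.card_eq
    obtain ⟨h1, h2, h3⟩ := SimpleGraph.is3Clique_triple_iff.mp ht
    rcases hmem a b h1 with ⟨g1, ga, gb⟩ | h1' <;>
      rcases hmem a c h2 with ⟨g2, ga', gc⟩ | h2' <;>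
        rcases hmem b c h3 with ⟨g3, gb', gc'⟩ | h3'
    · exact notri a b c g1 g2 g3
    · rcases h3' with ⟨rfl, rfl⟩ | ⟨rfl, rfl⟩
      · exact hcom ⟨a, by simpa using ga, g1.symm, g2⟩
      · exact hcom ⟨a, by simpa using ga, g2.symm, g1⟩
    · rcases h2' with ⟨rfl, rfl⟩ | ⟨rfl, rfl⟩
      · exact hcom ⟨b, by simpa using gb, g1, g3⟩
      · exact hcom ⟨b, by simpa using gb, g3.symm, g1.symm⟩
    · rcases h2' with ⟨e1, e2⟩ | ⟨e1, e2⟩ <;> rcases h3' with ⟨e3, e4⟩ | ⟨e3, e4⟩ <;>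
        first
          | exact hab (e1.trans e3.symm)
          | exact hac (e1.trans e4.symm)
          | exact hbc (e2.trans e4.symm)
          | exact hne (e1.symm.trans e3)
          | exact hne (e3.symm.trans e1)
          | exact hne (e2.symm.trans e3)
          | exact hne (e3.symm.trans e2)
          | exact hne (e2.symm.trans e4)
          | exact hne (e4.symm.trans e2)
    · rcases h1' with ⟨rfl, rfl⟩ | ⟨rfl, rfl⟩
      · exact hcom ⟨c, by simpa using gc, g2, g3.symm⟩
      · exact hcom ⟨c, by simpa using gc, g3, g2.symm⟩
    · rcases h1' with ⟨e1, e2⟩ | ⟨e1, e2⟩ <;> rcases h3' with ⟨e3, e4⟩ | ⟨e3, e4⟩ <;>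
        first
          | exact hab (e1.trans e3.symm)
          | exact hac (e1.trans e4.symm)
          | exact hbc (e2.trans e4.symm)
          | exact hne (e1.symm.trans e3)
          | exact hne (e3.symm.trans e1)
          | exact hne (e2.symm.trans e3)
          | exact hne (e3.symm.trans e2)
          | exact hne (e2.symm.trans e4)
          | exact hne (e4.symm.trans e2)
    · rcases h1' with ⟨e1, e2⟩ | ⟨e1, e2⟩ <;> rcases h2' with ⟨e3, e4⟩ | ⟨e3, e4⟩ <;>
        first
          | exact hab (e1.trans e3.symm)
          | exact hac (e1.trans e4.symm)
          | exact hbc (e2.trans e4.symm)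
          | exact hne (e1.symm.trans e3)
          | exact hne (e3.symm.trans e1)
          | exact hne (e2.symm.trans e3)
          | exact hne (e3.symm.trans e2)
          | exact hne (e2.symm.trans e4)
          | exact hne (e4.symm.trans e2)
    · rcases h1' with ⟨e1, e2⟩ | ⟨e1, e2⟩ <;> rcases h2' with ⟨e3, e4⟩ | ⟨e3, e4⟩ <;>
        first
          | exact hab (e1.trans e3.symm)
          | exact hac (e1.trans e4.symm)
          | exact hbc (e2.trans e4.symm)
          | exact hne (e1.symm.trans e3)
          | exact hne (e3.symm.trans e1)
          | exact hne (e2.symm.trans e3)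
          | exact hne (e3.symm.trans e2)
          | exact hne (e2.symm.trans e4)
          | exact hne (e4.symm.trans e2)
  · intro c'
    have hx13adj : (addEdge (deleteVerts P.graph {v1, v2, v3, v4, v5}) x1 x3).Adj x1 x3 := by
      rw [addEdge, SimpleGraph.sup_adj, SimpleGraph.fromRel_adj]
      exact Or.inr ⟨hne, Or.inl ⟨rfl, rfl⟩⟩
    obtain ⟨b1, b2, b3, b4, b5, hb1, hb2, hb3, hb4, hb5, g12, g23, g34, g45, g51⟩ :=
      cycle5_color (c' x1) (c' x2) (c' x3) (c' x4) (c' x5) (c'.valid hx13adj)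
    set c : V → Fin 3 := fun w =>
      if w = v1 then b1 else if w = v2 then b2 else if w = v3 then b3
      else if w = v4 then b4 else if w = v5 then b5 else c' w with hcdef
    have cv1 : c v1 = b1 := by simp [hcdef]
    have cv2 : c v2 = b2 := by simp [hcdef, Ne.symm d12]
    have cv3 : c v3 = b3 := by simp [hcdef, Ne.symm d13, Ne.symm d23]
    have cv4 : c v4 = b4 := by simp [hcdef, Ne.symm d14, Ne.symm d24, Ne.symm d34]
    have cv5 : c v5 = b5 := by simp [hcdef, Ne.symm d15, Ne.symm d25, Ne.symm d35, Ne.symm d45]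
    have cout : ∀ w, w ≠ v1 → w ≠ v2 → w ≠ v3 → w ≠ v4 → w ≠ v5 → c w = c' w := by
      intro w h1 h2 h3 h4 h5; simp [hcdef, h1, h2, h3, h4, h5]
    have cx1 : c x1 = c' x1 := cout _ nx1v1 hx1v2 nx1v3 nx1v4 hx1v5
    have cx2 : c x2 = c' x2 := cout _ hx2v1 nx2v2 hx2v3 nx2v4 nx2v5
    have cx3 : c x3 = c' x3 := cout _ nx3v1 hx3v2 nx3v3 hx3v4 nx3v5
    have cx4 : c x4 = c' x4 := cout _ nx4v1 nx4v2 hx4v3 nx4v4 hx4v5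
    have cx5 : c x5 = c' x5 := cout _ hx5v1 nx5v2 nx5v3 hx5v4 nx5v5
    refine ⟨SimpleGraph.Coloring.mk c ?_, ?_⟩
    · intro a b hab'
      rcases eq_or_ne a v1 with rfl | na1
      · rcases nb1 b hab' with rfl | rfl | rfl
        · rw [cv1, cv2]; exact g12
        · rw [cv1, cv5]; exact Ne.symm g51
        · rw [cv1, cx1]; exact hb1
      rcases eq_or_ne a v2 with rfl | na2
      · rcases nb2 b hab' with rfl | rfl | rfl
        · rw [cv2, cv1]; exact Ne.symm g12
        · rw [cv2, cv3]; exact g23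
        · rw [cv2, cx2]; exact hb2
      rcases eq_or_ne a v3 with rfl | na3
      · rcases nb3 b hab' with rfl | rfl | rfl
        · rw [cv3, cv2]; exact Ne.symm g23
        · rw [cv3, cv4]; exact g34
        · rw [cv3, cx3]; exact hb3
      rcases eq_or_ne a v4 with rfl | na4
      · rcases nb4 b hab' with rfl | rfl | rfl
        · rw [cv4, cv3]; exact Ne.symm g34
        · rw [cv4, cv5]; exact g45
        · rw [cv4, cx4]; exact hb4
      rcases eq_or_ne a v5 with rfl | na5
      · rcases nb5 b hab' with rfl | rfl | rfl
        · rw [cv5, cv4]; exact Ne.symm g45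
        · rw [cv5, cv1]; exact g51
        · rw [cv5, cx5]; exact hb5
      have hca : c a = c' a := cout a na1 na2 na3 na4 na5
      rcases eq_or_ne b v1 with rfl | nbb1
      · rcases nb1 a hab'.symm with rfl | rfl | rfl
        · exact absurd rfl na2
        · exact absurd rfl na5
        · rw [cx1, cv1]; exact Ne.symm hb1
      rcases eq_or_ne b v2 with rfl | nbb2
      · rcases nb2 a hab'.symm with rfl | rfl | rfl
        · exact absurd rfl na1
        · exact absurd rfl na3
        · rw [cx2, cv2]; exact Ne.symm hb2
      rcases eq_or_ne b v3 with rfl | nbb3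
      · rcases nb3 a hab'.symm with rfl | rfl | rfl
        · exact absurd rfl na2
        · exact absurd rfl na4
        · rw [cx3, cv3]; exact Ne.symm hb3
      rcases eq_or_ne b v4 with rfl | nbb4
      · rcases nb4 a hab'.symm with rfl | rfl | rfl
        · exact absurd rfl na3
        · exact absurd rfl na5
        · rw [cx4, cv4]; exact Ne.symm hb4
      rcases eq_or_ne b v5 with rfl | nbb5
      · rcases nb5 a hab'.symm with rfl | rfl | rfl
        · exact absurd rfl na4
        · exact absurd rfl na1
        · rw [cx5, cv5]; exact Ne.symm hb5
      have hcb : c b = c' b := cout b nbb1 nbb2 nbb3 nbb4 nbb5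
      have hGadj : (addEdge (deleteVerts P.graph {v1, v2, v3, v4, v5}) x1 x3).Adj a b := by
        rw [addEdge, SimpleGraph.sup_adj, deleteVerts, SimpleGraph.fromRel_adj]
        exact Or.inl ⟨hab'.ne, Or.inl ⟨hab', by simp [na1, na2, na3, na4, na5],
          by simp [nbb1, nbb2, nbb3, nbb4, nbb5]⟩⟩
      rw [hca, hcb]
      exact c'.valid hGadj
    · intro w hw
      simp only [List.mem_cons, List.not_mem_nil, or_false, not_or] at hw
      obtain ⟨h1, h2, h3, h4, h5⟩ := hw
      exact cout w h1 h2 h3 h4 h5
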